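/- arXiv:2212.01873 — 2 statements merged into one kernel-verified Lean document; each statement's English description precedes it below -/
import Mathlib

section
/- Let n ≥ 3 and let ω = (1 | m_1, …, m_n) be a normalized reduced class with m_1² + ⋯ + m_n² < 1. Then ω·E ≥ m_n for every exceptional class E ∈ ℰ_K; that is, E_n has the smallest ω-area among all exceptional classes. (Lemma 3.8, following Pinsonnault.) -/
open Finset

noncomputable section

/-- The intersection pairing on ℝ^{1,n}: coordinate `0` is the coefficient of `H`,
coordinate `i.succ` is the coefficient of `E_{i+1}`.  `H·H = 1`, `E_i·E_i = -1`,
distinct basis vectors are orthogonal. -/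
def ip (n : ℕ) (x y : Fin (n + 1) → ℝ) : ℝ :=
  x 0 * y 0 - ∑ i : Fin n, x i.succ * y i.succ

/-- The canonical class `K = -3H + E_1 + ⋯ + E_n`. -/
def Kc (n : ℕ) : Fin (n + 1) → ℝ := fun j => if (j : ℕ) = 0 then -3 else 1

/-- The reflection `x ↦ x + (x·l)l` along `l`. -/
def reflAlong (n : ℕ) (l : Fin (n + 1) → ℝ) : Function.End (Fin (n + 1) → ℝ) :=
  fun x => x + ip n x l • l

/-- The simple roots: `l_0 = H - E_1 - E_2 - E_3` and `l_i = E_i - E_{i+1}`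
for `1 ≤ i ≤ n - 1`. -/
def root (n : ℕ) (i : Fin n) : Fin (n + 1) → ℝ :=
  if (i : ℕ) = 0 then
    fun j => if (j : ℕ) = 0 then 1 else if (j : ℕ) ≤ 3 then -1 else 0
  else
    fun j => if (j : ℕ) = (i : ℕ) then 1 else if (j : ℕ) = (i : ℕ) + 1 then -1 else 0

/-- The Weyl group `W_n`, generated by the simple reflections `s_{l_0}, …, s_{l_{n-1}}`.
(The generators are involutions, so the submonoid they generate coincides with the
subgroup they generate.) -/
def Wgroup (n : ℕ) : Submonoid (Function.End (Fin (n + 1) → ℝ)) :=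
  Submonoid.closure (Set.range fun i : Fin n => reflAlong n (root n i))

/-- The class `E_n`. -/
def En (n : ℕ) : Fin (n + 1) → ℝ := fun j => if (j : ℕ) = n then 1 else 0

/-- The set `ℰ_K` of exceptional classes: the `W_n`-orbit of `E_n`. -/
def EK (n : ℕ) : Set (Fin (n + 1) → ℝ) := {e | ∃ w ∈ Wgroup n, e = w (En n)}

/-- The coefficients `m_1, …, m_n` of a class `νH - m_1E_1 - ⋯ - m_nE_n`. -/
def mcoord (n : ℕ) (v : Fin (n + 1) → ℝ) : Fin n → ℝ := fun i => -(v i.succ)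

/-- A class `νH - m_1E_1 - ⋯ - m_nE_n` is reduced if
`m_1 ≥ m_2 ≥ ⋯ ≥ m_n ≥ 0` and `ν ≥ m_1 + m_2 + m_3`. -/
def IsReducedVec (n : ℕ) (v : Fin (n + 1) → ℝ) : Prop :=
  Antitone (mcoord n v) ∧ (∀ i, 0 ≤ mcoord n v i) ∧
    ∑ i ∈ Finset.univ.filter (fun i : Fin n => (i : ℕ) < 3), mcoord n v i ≤ v 0

namespace Lem38

open Finset

lemma sum_support_pair {ι M : Type*} [Fintype ι] [DecidableEq ι] [AddCommMonoid M]
    (f : ι → M) (p q : ι) (hpq : p ≠ q) (h : ∀ j, j ≠ p → j ≠ q → f j = 0) :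
    ∑ j, f j = f p + f q := by
  rw [← Finset.sum_subset (Finset.subset_univ ({p, q} : Finset ι))
    (fun j _ hj => by
      simp only [Finset.mem_insert, Finset.mem_singleton, not_or] at hj
      exact h j hj.1 hj.2)]
  exact Finset.sum_pair hpq

lemma sum_first_three {M : Type*} [AddCommMonoid M] {n : ℕ} (hn : 3 ≤ n) (f : Fin n → M) :
    ∑ i ∈ Finset.univ.filter (fun i : Fin n => (i : ℕ) < 3), f i
      = f ⟨0, by omega⟩ + f ⟨1, by omega⟩ + f ⟨2, by omega⟩ := by
  have hset : Finset.univ.filter (fun i : Fin n => (i : ℕ) < 3)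
      = {(⟨0, by omega⟩ : Fin n), ⟨1, by omega⟩, ⟨2, by omega⟩} := by
    ext i
    simp [Fin.ext_iff]
    omega
  rw [hset, Finset.sum_insert (by simp [Fin.ext_iff]),
    Finset.sum_insert (by simp [Fin.ext_iff]), Finset.sum_singleton, add_assoc]

lemma int_abs_le_sq (k : ℤ) : |k| ≤ k ^ 2 := by
  rcases eq_or_ne k 0 with h | h
  · simp [h]
  · have h1 : 1 ≤ |k| := Int.one_le_abs h
    calc |k| = 1 * |k| := (one_mul _).symm
    _ ≤ |k| * |k| := mul_le_mul_of_nonneg_right h1 (abs_nonneg k)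
    _ = k ^ 2 := by rw [← sq_abs]; ring

end Lem38
namespace Lem38

open Finset

variable {n : ℕ}

/-- Integer vector cast to real. -/
def castVec (n : ℕ) (u : Fin (n + 1) → ℤ) : Fin (n + 1) → ℝ := fun j => (u j : ℝ)

/-- The coefficients `a_i` of an integer class. -/
def aZ (n : ℕ) (u : Fin (n + 1) → ℤ) : Fin n → ℤ := fun i => -(u i.succ)

/-- The invariant set: integral classes with `e·e = -1`, `K·e = -1`, `d ≥ 0`,
written out in coordinates. -/
def InSZ (n : ℕ) (u : Fin (n + 1) → ℤ) : Prop :=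
  (∑ i : Fin n, aZ n u i) = 3 * u 0 - 1 ∧
  (∑ i : Fin n, (aZ n u i) ^ 2) = (u 0) ^ 2 + 1 ∧ 0 ≤ u 0

/-- Claim C : the first three of the `a_i` sum to at most `2d`. -/
lemma claimC (hn : 3 ≤ n) {u : Fin (n + 1) → ℤ} (h : InSZ n u) :
    aZ n u ⟨0, by omega⟩ + aZ n u ⟨1, by omega⟩ + aZ n u ⟨2, by omega⟩ ≤ 2 * u 0 := by
  obtain ⟨h1, h2, h3⟩ := h
  have hsplit1 := Finset.sum_filter_add_sum_filter_not Finset.univ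
    (fun i : Fin n => (i : ℕ) < 3) (aZ n u)
  have hsplit2 := Finset.sum_filter_add_sum_filter_not Finset.univ
    (fun i : Fin n => (i : ℕ) < 3) (fun i => (aZ n u i) ^ 2)
  rw [sum_first_three hn] at hsplit1 hsplit2
  have habs : |∑ i ∈ Finset.univ.filter (fun i : Fin n => ¬ (i : ℕ) < 3), aZ n u i|
      ≤ ∑ i ∈ Finset.univ.filter (fun i : Fin n => ¬ (i : ℕ) < 3), (aZ n u i) ^ 2 := by
    refine (Finset.abs_sum_le_sum_abs _ _).trans ?_
    exact Finset.sum_le_sum fun i _ => int_abs_le_sq (aZ n u i)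
  -- abbreviate
  obtain ⟨A0, hA0⟩ : ∃ x, aZ n u ⟨0, by omega⟩ = x := ⟨_, rfl⟩
  obtain ⟨A1, hA1⟩ : ∃ x, aZ n u ⟨1, by omega⟩ = x := ⟨_, rfl⟩
  obtain ⟨A2, hA2⟩ : ∃ x, aZ n u ⟨2, by omega⟩ = x := ⟨_, rfl⟩
  obtain ⟨R1, hR1⟩ : ∃ x, ∑ i ∈ Finset.univ.filter (fun i : Fin n => ¬ (i : ℕ) < 3), aZ n u i = x :=
    ⟨_, rfl⟩
  obtain ⟨R2, hR2⟩ :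
      ∃ x, ∑ i ∈ Finset.univ.filter (fun i : Fin n => ¬ (i : ℕ) < 3), (aZ n u i) ^ 2 = x :=
    ⟨_, rfl⟩
  obtain ⟨D, hD⟩ : ∃ x, u 0 = x := ⟨_, rfl⟩
  rw [hA0, hA1, hA2] at hsplit1 hsplit2 ⊢
  rw [hR1] at hsplit1 habs
  rw [hR2] at hsplit2 habs
  rw [hD] at h1 h2 h3 ⊢
  have hkey : -R1 ≤ R2 := (neg_le_abs R1).trans habs
  -- now pure integer arithmetic
  by_contra hc
  push_neg at hc
  have hc1 : 2 * D + 1 ≤ A0 + A1 + A2 := Int.lt_iff_add_one_le.1 hc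
  nlinarith [hkey, h1, h2, h3, hc1, hsplit1, hsplit2, sq_nonneg (A0 - A1), sq_nonneg (A0 - A2),
    sq_nonneg (A1 - A2), mul_nonneg (sub_nonneg.2 hc1) h3]

end Lem38
namespace Lem38

open Finset

variable {n : ℕ}

/-- `t = x_0 + x_1 + x_2 + x_3`, the pairing with `l_0`. -/
def tR (n : ℕ) (hn : 3 ≤ n) (x : Fin (n + 1) → ℝ) : ℝ :=
  x 0 + x ⟨1, by omega⟩ + x ⟨2, by omega⟩ + x ⟨3, by omega⟩

def tZ (n : ℕ) (hn : 3 ≤ n) (u : Fin (n + 1) → ℤ) : ℤ :=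
  u 0 + u ⟨1, by omega⟩ + u ⟨2, by omega⟩ + u ⟨3, by omega⟩

/-- The integer Cremona move. -/
def cremZ (n : ℕ) (hn : 3 ≤ n) (u : Fin (n + 1) → ℤ) : Fin (n + 1) → ℤ :=
  fun j => if (j : ℕ) = 0 then u j + tZ n hn u
    else if (j : ℕ) ≤ 3 then u j - tZ n hn u else u j

lemma root_pos_val (i : Fin n) (hi : (i : ℕ) ≠ 0) :
    root n i = fun j : Fin (n + 1) =>
      if (j : ℕ) = (i : ℕ) then 1 else if (j : ℕ) = (i : ℕ) + 1 then -1 else 0 := by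
  simp only [root, if_neg hi]

lemma ip_root_swap (i : Fin n) (hi : (i : ℕ) ≠ 0) (x : Fin (n + 1) → ℝ) :
    ip n x (root n i) = x ⟨(i : ℕ) + 1, by omega⟩ - x ⟨(i : ℕ), by omega⟩ := by
  have hne : (⟨(i : ℕ), by omega⟩ : Fin (n + 1)) ≠ ⟨(i : ℕ) + 1, by omega⟩ := by
    simp [Fin.ext_iff]
  have hsupp : ∀ j : Fin (n + 1), j ≠ ⟨(i : ℕ), by omega⟩ → j ≠ ⟨(i : ℕ) + 1, by omega⟩ →
      x j * root n i j = 0 := by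
    intro j hj1 hj2
    have hj1' : (j : ℕ) ≠ (i : ℕ) := fun h => hj1 (Fin.ext h)
    have hj2' : (j : ℕ) ≠ (i : ℕ) + 1 := fun h => hj2 (Fin.ext h)
    simp only [root_pos_val i hi]
    rw [if_neg hj1', if_neg hj2', mul_zero]
  have hfull := sum_support_pair (fun j => x j * root n i j) _ _ hne hsupp
  have hv1 : root n i ⟨(i : ℕ), by omega⟩ = 1 := by simp [root_pos_val i hi]
  have hv2 : root n i ⟨(i : ℕ) + 1, by omega⟩ = -1 := by
    simp [root_pos_val i hi]
  have hv0 : root n i 0 = 0 := by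
    simp only [root_pos_val i hi]
    rw [if_neg, if_neg] <;> simp <;> omega
  have hsucc := Fin.sum_univ_succ (fun j => x j * root n i j)
  rw [hv1, hv2] at hfull
  rw [hv0] at hsucc
  simp only [ip, hv0, mul_zero]
  rw [hfull] at hsucc
  linarith [hsucc]

lemma refl_swap (i : Fin n) (hi : (i : ℕ) ≠ 0) (x : Fin (n + 1) → ℝ) :
    reflAlong n (root n i) x
      = x ∘ Equiv.swap (⟨(i : ℕ), by omega⟩ : Fin (n + 1)) ⟨(i : ℕ) + 1, by omega⟩ := by
  funext j
  have hip := ip_root_swap i hi x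
  show x j + ip n x (root n i) * root n i j = _
  by_cases hj1 : j = (⟨(i : ℕ), by omega⟩ : Fin (n + 1))
  · subst hj1
    rw [Function.comp_apply, Equiv.swap_apply_left]
    have : root n i ⟨(i : ℕ), by omega⟩ = 1 := by simp [root_pos_val i hi]
    rw [this, hip]; ring
  · by_cases hj2 : j = (⟨(i : ℕ) + 1, by omega⟩ : Fin (n + 1))
    · subst hj2
      rw [Function.comp_apply, Equiv.swap_apply_right]
      have : root n i ⟨(i : ℕ) + 1, by omega⟩ = -1 := by simp [root_pos_val i hi]
      rw [this, hip]; ring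
    · rw [Function.comp_apply, Equiv.swap_apply_of_ne_of_ne hj1 hj2]
      have hj1' : (j : ℕ) ≠ (i : ℕ) := fun h => hj1 (Fin.ext h)
      have hj2' : (j : ℕ) ≠ (i : ℕ) + 1 := fun h => hj2 (Fin.ext h)
      have : root n i j = 0 := by
        simp only [root_pos_val i hi]
        rw [if_neg hj1', if_neg hj2']
      rw [this, mul_zero, add_zero]

lemma root_zero_val (i : Fin n) (hi : (i : ℕ) = 0) :
    root n i = fun j : Fin (n + 1) =>
      if (j : ℕ) = 0 then 1 else if (j : ℕ) ≤ 3 then -1 else 0 := by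
  simp only [root, if_pos hi]

lemma ip_root_zero (hn : 3 ≤ n) (i : Fin n) (hi : (i : ℕ) = 0) (x : Fin (n + 1) → ℝ) :
    ip n x (root n i) = tR n hn x := by
  have hsum : ∀ k : Fin n, x k.succ * root n i k.succ
      = if (k : ℕ) < 3 then -(x k.succ) else 0 := by
    intro k
    simp only [root_zero_val i hi]
    have h1 : ((k.succ : Fin (n + 1)) : ℕ) = (k : ℕ) + 1 := rfl
    rw [h1]
    by_cases hk : (k : ℕ) < 3
    · rw [if_neg (by omega), if_pos (by omega), if_pos hk]; ring
    · rw [if_neg (by omega), if_neg (by omega), if_neg hk, mul_zero]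
  have h0 : root n i 0 = 1 := by simp [root_zero_val i hi]
  simp only [ip, h0, mul_one]
  rw [Finset.sum_congr rfl (fun k _ => hsum k)]
  rw [← Finset.sum_filter]
  rw [sum_first_three hn (fun k : Fin n => -(x k.succ))]
  have e1 : ((⟨0, by omega⟩ : Fin n)).succ = (⟨1, by omega⟩ : Fin (n + 1)) := rfl
  have e2 : ((⟨1, by omega⟩ : Fin n)).succ = (⟨2, by omega⟩ : Fin (n + 1)) := rfl
  have e3 : ((⟨2, by omega⟩ : Fin n)).succ = (⟨3, by omega⟩ : Fin (n + 1)) := rfl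
  rw [e1, e2, e3]
  simp only [tR]
  ring

lemma refl_zero (hn : 3 ≤ n) (i : Fin n) (hi : (i : ℕ) = 0) (x : Fin (n + 1) → ℝ) :
    reflAlong n (root n i) x = fun j : Fin (n + 1) =>
      if (j : ℕ) = 0 then x j + tR n hn x
      else if (j : ℕ) ≤ 3 then x j - tR n hn x else x j := by
  funext j
  show x j + ip n x (root n i) * root n i j = _
  rw [ip_root_zero hn i hi, root_zero_val i hi]
  dsimp only
  by_cases hj0 : (j : ℕ) = 0
  · rw [if_pos hj0, if_pos hj0]; ring
  · by_cases hj3 : (j : ℕ) ≤ 3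
    · rw [if_neg hj0, if_pos hj3, if_neg hj0, if_pos hj3]; ring
    · rw [if_neg hj0, if_neg hj3, if_neg hj0, if_neg hj3]; ring

end Lem38
namespace Lem38

open Finset

variable {n : ℕ}

lemma sum_succ_comp {M : Type*} [AddCommGroup M] (σ : Equiv.Perm (Fin (n + 1))) (hσ : σ 0 = 0)
    (f : Fin (n + 1) → M) : ∑ i : Fin n, f (σ i.succ) = ∑ i : Fin n, f i.succ := by
  have h1 := Fin.sum_univ_succ (fun j => f (σ j))
  have h2 := Fin.sum_univ_succ f
  have h3 := Equiv.sum_comp σ f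
  rw [hσ] at h1
  exact add_left_cancel ((h1.symm.trans h3).trans h2)

lemma InSZ_swap (u : Fin (n + 1) → ℤ) (hu : InSZ n u) (p q : Fin (n + 1))
    (hp : p ≠ 0) (hq : q ≠ 0) : InSZ n (u ∘ Equiv.swap p q) := by
  obtain ⟨h1, h2, h3⟩ := hu
  have hσ0 : Equiv.swap p q 0 = 0 := Equiv.swap_apply_of_ne_of_ne (Ne.symm hp) (Ne.symm hq)
  have hz : (u ∘ Equiv.swap p q) 0 = u 0 := by simp [hσ0]
  refine ⟨?_, ?_, by rw [hz]; exact h3⟩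
  · have e : ∀ i : Fin n, aZ n (u ∘ Equiv.swap p q) i
        = (fun j => -(u j)) (Equiv.swap p q i.succ) := fun i => rfl
    rw [Finset.sum_congr rfl (fun i _ => e i), sum_succ_comp _ hσ0 (fun j => -(u j)), hz]
    exact h1
  · have e : ∀ i : Fin n, (aZ n (u ∘ Equiv.swap p q) i) ^ 2
        = (fun j => (u j) ^ 2) (Equiv.swap p q i.succ) := by
      intro i; simp [aZ]
    rw [Finset.sum_congr rfl (fun i _ => e i), sum_succ_comp _ hσ0 (fun j => (u j) ^ 2), hz]
    have e2 : ∀ i : Fin n, (fun j => (u j) ^ 2) i.succ = (aZ n u i) ^ 2 := by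
      intro i; simp [aZ]
    rw [Finset.sum_congr rfl (fun i _ => e2 i)]
    exact h2

lemma crem_cast (hn : 3 ≤ n) (i : Fin n) (hi : (i : ℕ) = 0) (u : Fin (n + 1) → ℤ) :
    reflAlong n (root n i) (castVec n u) = castVec n (cremZ n hn u) := by
  rw [refl_zero hn i hi]
  have ht : tR n hn (castVec n u) = ((tZ n hn u : ℤ) : ℝ) := by
    simp only [tR, tZ, castVec]; push_cast; ring
  funext j
  simp only [castVec, cremZ, ht]
  split_ifs <;> push_cast <;> ring

lemma aZ_crem (hn : 3 ≤ n) (u : Fin (n + 1) → ℤ) (i : Fin n) :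
    aZ n (cremZ n hn u) i = aZ n u i + (if (i : ℕ) < 3 then tZ n hn u else 0) := by
  simp only [aZ, cremZ, Fin.val_succ]
  rw [if_neg (by omega)]
  by_cases hk : (i : ℕ) < 3
  · rw [if_pos (by omega), if_pos hk]; ring
  · rw [if_neg (by omega), if_neg hk]; ring

lemma sum_ite_three (hn : 3 ≤ n) (t : ℤ) :
    ∑ i : Fin n, (if (i : ℕ) < 3 then t else 0) = 3 * t := by
  rw [← Finset.sum_filter, sum_first_three hn (fun _ : Fin n => t)]
  ring

lemma InSZ_crem (hn : 3 ≤ n) (u : Fin (n + 1) → ℤ) (hu : InSZ n u) :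
    InSZ n (cremZ n hn u) := by
  have hC := claimC hn hu
  obtain ⟨h1, h2, h3⟩ := hu
  have hz : cremZ n hn u 0 = u 0 + tZ n hn u := by simp [cremZ]
  have e1 : ((⟨0, by omega⟩ : Fin n)).succ = (⟨1, by omega⟩ : Fin (n + 1)) := rfl
  have e2 : ((⟨1, by omega⟩ : Fin n)).succ = (⟨2, by omega⟩ : Fin (n + 1)) := rfl
  have e3 : ((⟨2, by omega⟩ : Fin n)).succ = (⟨3, by omega⟩ : Fin (n + 1)) := rfl
  have hA : aZ n u ⟨0, by omega⟩ + aZ n u ⟨1, by omega⟩ + aZ n u ⟨2, by omega⟩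
      = u 0 - tZ n hn u := by
    simp only [aZ, tZ, e1, e2, e3]; ring
  refine ⟨?_, ?_, ?_⟩
  · rw [Finset.sum_congr rfl (fun i _ => aZ_crem hn u i), Finset.sum_add_distrib,
      sum_ite_three hn, h1, hz]
    ring
  · have e : ∀ i : Fin n, (aZ n (cremZ n hn u) i) ^ 2
        = (aZ n u i) ^ 2 + (if (i : ℕ) < 3 then
            2 * tZ n hn u * aZ n u i + (tZ n hn u) ^ 2 else 0) := by
      intro i
      rw [aZ_crem hn u i]
      by_cases hk : (i : ℕ) < 3
      · rw [if_pos hk, if_pos hk]; ring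
      · rw [if_neg hk, if_neg hk]; ring
    rw [Finset.sum_congr rfl (fun i _ => e i), Finset.sum_add_distrib, ← Finset.sum_filter,
      sum_first_three hn (fun i : Fin n => 2 * tZ n hn u * aZ n u i + (tZ n hn u) ^ 2), h2, hz]
    linear_combination (2 * tZ n hn u) * hA
  · rw [hz]
    linarith [hC, hA]

lemma end_mul_apply (x y : Function.End (Fin (n + 1) → ℝ)) (v : Fin (n + 1) → ℝ) :
    (x * y) v = x (y v) := rfl

lemma orbit_in_S (hn : 3 ≤ n) : ∀ w ∈ Wgroup n, ∀ u : Fin (n + 1) → ℤ, InSZ n u →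
    ∃ u', InSZ n u' ∧ w (castVec n u) = castVec n u' := by
  intro w hw
  induction hw using Submonoid.closure_induction with
  | mem x hx =>
    obtain ⟨i, rfl⟩ := hx
    intro u hu
    by_cases hi : (i : ℕ) = 0
    · exact ⟨cremZ n hn u, InSZ_crem hn u hu, crem_cast hn i hi u⟩
    · have hp : (⟨(i : ℕ), by omega⟩ : Fin (n + 1)) ≠ 0 := by
        simp [Fin.ext_iff]; omega
      have hq : (⟨(i : ℕ) + 1, by omega⟩ : Fin (n + 1)) ≠ 0 := by
        simp [Fin.ext_iff]
      refine ⟨u ∘ Equiv.swap ⟨(i : ℕ), by omega⟩ ⟨(i : ℕ) + 1, by omega⟩,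
        InSZ_swap u hu _ _ hp hq, ?_⟩
      show reflAlong n (root n i) (castVec n u) = _
      rw [refl_swap i hi]
      rfl
  | one => exact fun u hu => ⟨u, hu, rfl⟩
  | mul x y hx hy ihx ihy =>
    intro u hu
    obtain ⟨u1, hu1, he1⟩ := ihy u hu
    obtain ⟨u2, hu2, he2⟩ := ihx u1 hu1
    exact ⟨u2, hu2, by rw [end_mul_apply, he1, he2]⟩

end Lem38
namespace Lem38

open Finset

variable {n : ℕ}

/-- The area of an integer class against `ω`, in `a`-coordinates. -/
def Ar (n : ℕ) (ω : Fin (n + 1) → ℝ) (u : Fin (n + 1) → ℤ) : ℝ :=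
  (u 0 : ℝ) - ∑ i : Fin n, mcoord n ω i * (aZ n u i : ℝ)

lemma ip_cast (ω : Fin (n + 1) → ℝ) (hnorm : ω 0 = 1) (u : Fin (n + 1) → ℤ) :
    ip n ω (castVec n u) = Ar n ω u := by
  simp only [ip, castVec, Ar, hnorm, one_mul]
  congr 1
  refine Finset.sum_congr rfl fun i _ => ?_
  simp only [mcoord, aZ]
  push_cast
  ring

/-- `a`-coordinates sorted in (weakly) decreasing order. -/
def SrtA (n : ℕ) (u : Fin (n + 1) → ℤ) : Prop :=
  ∀ (k : ℕ) (h : k + 1 < n), aZ n u ⟨k + 1, h⟩ ≤ aZ n u ⟨k, by omega⟩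

lemma srt_le {u : Fin (n + 1) → ℤ} (hu : SrtA n u) (k l : ℕ) (hk : k < n) (hl : l < n)
    (hkl : k ≤ l) : aZ n u ⟨l, hl⟩ ≤ aZ n u ⟨k, hk⟩ := by
  have key : ∀ t, ∀ (h : k + t < n), aZ n u ⟨k + t, h⟩ ≤ aZ n u ⟨k, hk⟩ := by
    intro t
    induction t with
    | zero => intro h; exact le_of_eq rfl
    | succ t ih =>
      intro h
      exact (hu (k + t) h).trans (ih (by omega))
  have := key (l - k) (by omega)
  have he : (⟨k + (l - k), by omega⟩ : Fin n) = ⟨l, hl⟩ := by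
    ext; simp; omega
  rwa [he] at this

/-- Sorting measure. -/
def mInt (n : ℕ) (u : Fin (n + 1) → ℤ) : ℤ := ∑ i : Fin n, (i : ℕ) * aZ n u i

lemma mInt_lb {u : Fin (n + 1) → ℤ} (hu : InSZ n u) :
    -((n : ℤ) * ((u 0) ^ 2 + 1)) ≤ mInt n u := by
  obtain ⟨h1, h2, h3⟩ := hu
  have hterm : ∀ i : Fin n, -((n : ℤ) * (aZ n u i) ^ 2) ≤ (i : ℕ) * aZ n u i := by
    intro i
    have hi0 : (0 : ℤ) ≤ (i : ℕ) := by positivity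
    have hin : ((i : ℕ) : ℤ) ≤ (n : ℤ) := by exact_mod_cast (i.isLt.le)
    have c1 : ((i : ℕ) : ℤ) * (-(|aZ n u i|)) ≤ (i : ℕ) * aZ n u i :=
      mul_le_mul_of_nonneg_left (neg_abs_le _) hi0
    have c2 : (n : ℤ) * (-(|aZ n u i|)) ≤ ((i : ℕ) : ℤ) * (-(|aZ n u i|)) := by
      have : -(|aZ n u i|) ≤ 0 := neg_nonpos.2 (abs_nonneg _)
      exact mul_le_mul_of_nonpos_right hin this
    have c3 : -((n : ℤ) * (aZ n u i) ^ 2) ≤ (n : ℤ) * (-(|aZ n u i|)) := by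
      have := mul_le_mul_of_nonneg_left (int_abs_le_sq (aZ n u i))
        (by positivity : (0 : ℤ) ≤ (n : ℤ))
      linarith
    linarith
  have e : -((n : ℤ) * ((u 0) ^ 2 + 1)) = ∑ i : Fin n, -((n : ℤ) * (aZ n u i) ^ 2) := by
    rw [Finset.sum_neg_distrib, ← Finset.mul_sum, h2]
  rw [e]
  exact Finset.sum_le_sum fun i _ => hterm i

/-- One adjacent transposition toward sortedness. -/
lemma swap_step (ω : Fin (n + 1) → ℝ) (hm : Antitone (mcoord n ω))
    {u : Fin (n + 1) → ℤ} (hu : InSZ n u) (k : ℕ) (hk : k + 1 < n)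
    (hvio : aZ n u ⟨k, by omega⟩ < aZ n u ⟨k + 1, hk⟩) :
    ∃ u', InSZ n u' ∧ u' 0 = u 0 ∧ Ar n ω u' ≤ Ar n ω u ∧ mInt n u' < mInt n u := by
  set p : Fin n := ⟨k, by omega⟩ with hp
  set q : Fin n := ⟨k + 1, hk⟩ with hq
  have hpq : p ≠ q := by simp [hp, hq, Fin.ext_iff]
  have hpqs : p.succ ≠ q.succ := fun h => hpq (Fin.succ_injective _ h)
  set σ := Equiv.swap p.succ q.succ with hσ
  have hps : σ p.succ = q.succ := Equiv.swap_apply_left _ _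
  have hqs : σ q.succ = p.succ := Equiv.swap_apply_right _ _
  have hfix : ∀ i : Fin n, i ≠ p → i ≠ q → σ i.succ = i.succ := by
    intro i h1 h2
    exact Equiv.swap_apply_of_ne_of_ne (fun h => h1 (Fin.succ_injective _ h))
      (fun h => h2 (Fin.succ_injective _ h))
  set u' := u ∘ σ with hu'
  have hz : u' 0 = u 0 := by
    have : σ 0 = 0 := Equiv.swap_apply_of_ne_of_ne (Ne.symm (Fin.succ_ne_zero p))
      (Ne.symm (Fin.succ_ne_zero q))
    simp [hu', this]
  have haz : ∀ i : Fin n, aZ n u' i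
      = if i = p then aZ n u q else if i = q then aZ n u p else aZ n u i := by
    intro i
    by_cases h1 : i = p
    · subst h1; simp [aZ, hu', hps]
    · by_cases h2 : i = q
      · subst h2; simp [aZ, hu', hqs, h1]
      · simp [aZ, hu', hfix i h1 h2, h1, h2]
  have hins : InSZ n u' := InSZ_swap u hu p.succ q.succ (Fin.succ_ne_zero p) (Fin.succ_ne_zero q)
  refine ⟨u', hins, hz, ?_, ?_⟩
  · -- area comparison
    have hdiff : ∀ i : Fin n,
        mcoord n ω i * (aZ n u i : ℝ) - mcoord n ω i * (aZ n u' i : ℝ)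
        = (if i = p then mcoord n ω p * ((aZ n u p : ℝ) - (aZ n u q : ℝ))
           else if i = q then mcoord n ω q * ((aZ n u q : ℝ) - (aZ n u p : ℝ)) else 0) := by
      intro i
      rw [haz i]
      by_cases h1 : i = p
      · subst h1; rw [if_pos rfl, if_pos rfl]; ring
      · by_cases h2 : i = q
        · subst h2; rw [if_neg h1, if_neg h1, if_pos rfl, if_pos rfl]; ring
        · rw [if_neg h1, if_neg h2, if_neg h1, if_neg h2]; ring
    have hsum : ∑ i : Fin n, (mcoord n ω i * (aZ n u i : ℝ) - mcoord n ω i * (aZ n u' i : ℝ))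
        = mcoord n ω p * ((aZ n u p : ℝ) - (aZ n u q : ℝ))
          + mcoord n ω q * ((aZ n u q : ℝ) - (aZ n u p : ℝ)) := by
      rw [Finset.sum_congr rfl fun i _ => hdiff i]
      rw [sum_support_pair _ p q hpq (fun j h1 h2 => by rw [if_neg h1, if_neg h2])]
      rw [if_pos rfl, if_neg (show ¬ q = p from fun h => hpq h.symm), if_pos rfl]
    have hkey : 0 ≤ (mcoord n ω p - mcoord n ω q) * ((aZ n u q : ℝ) - (aZ n u p : ℝ)) := by
      apply mul_nonneg
      · have := hm (show p ≤ q by simp only [hp, hq, Fin.mk_le_mk]; omega)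
        linarith
      · have : (aZ n u p : ℝ) < (aZ n u q : ℝ) := by exact_mod_cast hvio
        linarith
    simp only [Ar, hz]
    rw [Finset.sum_sub_distrib] at hsum
    nlinarith [hsum, hkey]
  · -- measure decrease
    have hdiff : ∀ i : Fin n,
        ((i : ℕ) : ℤ) * aZ n u' i - ((i : ℕ) : ℤ) * aZ n u i
        = (if i = p then (k : ℤ) * (aZ n u q - aZ n u p)
           else if i = q then ((k : ℤ) + 1) * (aZ n u p - aZ n u q) else 0) := by
      intro i
      rw [haz i]
      by_cases h1 : i = p
      · subst h1; rw [if_pos rfl, if_pos rfl]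
        simp [hp]; ring
      · by_cases h2 : i = q
        · subst h2; rw [if_neg h1, if_neg h1, if_pos rfl, if_pos rfl]
          simp [hq]; push_cast; ring
        · rw [if_neg h1, if_neg h2, if_neg h1, if_neg h2]; ring
    have hsum : mInt n u' - mInt n u
        = (k : ℤ) * (aZ n u q - aZ n u p) + ((k : ℤ) + 1) * (aZ n u p - aZ n u q) := by
      simp only [mInt]
      rw [← Finset.sum_sub_distrib]
      rw [Finset.sum_congr rfl fun i _ => hdiff i]
      rw [sum_support_pair _ p q hpq (fun j h1 h2 => by rw [if_neg h1, if_neg h2])]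
      rw [if_pos rfl, if_neg (show ¬ q = p from fun h => hpq h.symm), if_pos rfl]
    have : mInt n u' - mInt n u = aZ n u p - aZ n u q := by rw [hsum]; ring
    omega

/-- Sorting: from any `InSZ` class we reach a sorted one without increasing area. -/
lemma sortZ (ω : Fin (n + 1) → ℝ) (hm : Antitone (mcoord n ω)) :
    ∀ (N : ℕ) (u : Fin (n + 1) → ℤ), InSZ n u → (mInt n u + n * ((u 0) ^ 2 + 1)).toNat ≤ N →
    ∃ u', InSZ n u' ∧ u' 0 = u 0 ∧ SrtA n u' ∧ Ar n ω u' ≤ Ar n ω u := by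
  intro N
  induction N using Nat.strong_induction_on with
  | _ N ih =>
    intro u hu hN
    by_cases hs : SrtA n u
    · exact ⟨u, hu, rfl, hs, le_refl _⟩
    · simp only [SrtA, not_forall, not_le] at hs
      obtain ⟨k, hk, hvio⟩ := hs
      obtain ⟨u', hu', hz, hAr, hlt⟩ := swap_step ω hm hu k hk hvio
      have hb' := mInt_lb hu'
      have hb := mInt_lb hu
      have hmeas : (mInt n u' + n * ((u' 0) ^ 2 + 1)).toNat
          < (mInt n u + n * ((u 0) ^ 2 + 1)).toNat := by
        rw [hz] at hb' ⊢
        omega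
      obtain ⟨u'', h1, h2, h3, h4⟩ := ih _ (by omega) u' hu' (le_refl _)
      exact ⟨u'', h1, h2.trans hz, h3, h4.trans hAr⟩

end Lem38
namespace Lem38

open Finset

variable {n : ℕ}

/-- Abel-type estimate: if all prefix sums of `c` are nonpositive and `M` is
nonnegative and antitone, then `∑ M·c ≤ 0`. -/
lemma abel_nonpos (M c : ℕ → ℝ) (hMa : ∀ k l, k ≤ l → M l ≤ M k) (hM0 : ∀ k, 0 ≤ M k)
    (N : ℕ) (hpref : ∀ K, K ≤ N → ∑ k ∈ Finset.range K, c k ≤ 0) :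
    ∑ k ∈ Finset.range N, M k * c k ≤ 0 := by
  have key : ∀ K, K ≤ N → ∑ k ∈ Finset.range K, M k * c k ≤ M K * ∑ k ∈ Finset.range K, c k := by
    intro K
    induction K with
    | zero => intro _; simp
    | succ K ihK =>
      intro hK
      rw [Finset.sum_range_succ, Finset.sum_range_succ (f := c)]
      have h1 := ihK (by omega)
      have h2 : M K * (∑ k ∈ Finset.range K, c k) + M K * c K
          = M K * (∑ k ∈ Finset.range K, c k + c K) := by ring
      have h3 : M K * (∑ k ∈ Finset.range K, c k + c K)
          ≤ M (K + 1) * (∑ k ∈ Finset.range K, c k + c K) := by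
        apply mul_le_mul_of_nonpos_right (hMa K (K + 1) (by omega))
        have := hpref (K + 1) hK
        rwa [Finset.sum_range_succ] at this
      linarith
  have h := key N le_rfl
  have := mul_nonpos_iff.2 (Or.inr ⟨hpref N le_rfl, hM0 N⟩)
  linarith

lemma Ar_crem (hn : 3 ≤ n) (ω : Fin (n + 1) → ℝ) (u : Fin (n + 1) → ℤ) :
    Ar n ω (cremZ n hn u) = Ar n ω u + (tZ n hn u : ℝ)
      * (1 - (mcoord n ω ⟨0, by omega⟩ + mcoord n ω ⟨1, by omega⟩ + mcoord n ω ⟨2, by omega⟩)) := by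
  have hz : cremZ n hn u 0 = u 0 + tZ n hn u := by simp [cremZ]
  have e : ∀ i : Fin n, mcoord n ω i * ((aZ n (cremZ n hn u) i : ℤ) : ℝ)
      = mcoord n ω i * ((aZ n u i : ℤ) : ℝ)
        + (if (i : ℕ) < 3 then mcoord n ω i * (tZ n hn u : ℝ) else 0) := by
    intro i
    rw [aZ_crem hn u i]
    by_cases hk : (i : ℕ) < 3
    · rw [if_pos hk, if_pos hk]; push_cast; ring
    · rw [if_neg hk, if_neg hk]; push_cast; ring
  simp only [Ar, hz]
  rw [Finset.sum_congr rfl fun i _ => e i, Finset.sum_add_distrib, ← Finset.sum_filter,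
    sum_first_three hn (fun i : Fin n => mcoord n ω i * (tZ n hn u : ℝ))]
  push_cast
  ring

/-- The case `d = 0` of the descent: the class must be `E_n` itself. -/
lemma case_d0 (hn : 3 ≤ n) (ω : Fin (n + 1) → ℝ) {u : Fin (n + 1) → ℤ}
    (hu : InSZ n u) (hsrt : SrtA n u) (hd : u 0 = 0) :
    Ar n ω u = mcoord n ω ⟨n - 1, Nat.sub_lt (by omega) Nat.one_pos⟩ := by
  obtain ⟨h1, h2, h3⟩ := hu
  rw [hd] at h1 h2
  simp only [mul_zero, zero_sub, zero_pow, ne_eq, OfNat.ofNat_ne_zero,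
    not_false_eq_true, zero_add] at h1 h2
  set lst : Fin n := ⟨n - 1, by omega⟩ with hlst
  have hle : ∀ i : Fin n, aZ n u lst ≤ aZ n u i := by
    intro i
    exact srt_le hsrt (i : ℕ) (n - 1) i.isLt (by omega) (by omega)
  have hneg : aZ n u lst ≤ -1 := by
    by_contra hc
    push_neg at hc
    have : ∀ i ∈ Finset.univ, (0 : ℤ) ≤ aZ n u i := fun i _ => by have := hle i; omega
    have := Finset.sum_nonneg this
    omega
  have hsq1 : 1 ≤ (aZ n u lst) ^ 2 := by nlinarith
  have hsplit : (∑ i ∈ Finset.univ.erase lst, (aZ n u i) ^ 2) + (aZ n u lst) ^ 2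
      = ∑ i : Fin n, (aZ n u i) ^ 2 := by
    simpa using Finset.sum_erase_add Finset.univ (fun i => (aZ n u i) ^ 2) (Finset.mem_univ lst)
  have hrest : ∑ i ∈ Finset.univ.erase lst, (aZ n u i) ^ 2 = 0 := by
    have h0 : (0 : ℤ) ≤ ∑ i ∈ Finset.univ.erase lst, (aZ n u i) ^ 2 :=
      Finset.sum_nonneg fun i _ => sq_nonneg _
    omega
  have hzero : ∀ i ∈ Finset.univ.erase lst, aZ n u i = 0 := by
    intro i hi
    have := (Finset.sum_eq_zero_iff_of_nonneg fun i _ => sq_nonneg (aZ n u i)).1 hrest i hi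
    exact pow_eq_zero_iff (by omega) |>.1 this
  have hlsq : (aZ n u lst) ^ 2 = 1 := by omega
  have hlval : aZ n u lst = -1 := by nlinarith [sq_nonneg (aZ n u lst + 1)]
  have hsum : ∑ i : Fin n, mcoord n ω i * ((aZ n u i : ℤ) : ℝ)
      = mcoord n ω lst * ((aZ n u lst : ℤ) : ℝ) := by
    apply Finset.sum_eq_single lst
    · intro i _ hi
      rw [hzero i (Finset.mem_erase.2 ⟨hi, Finset.mem_univ i⟩)]
      simp
    · intro h; exact absurd (Finset.mem_univ lst) h
  simp only [Ar, hd, hsum, hlval]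
  push_cast
  ring

end Lem38
namespace Lem38

open Finset

variable {n : ℕ}

lemma main_bound (hn : 3 ≤ n) (ω : Fin (n + 1) → ℝ)
    (hm : Antitone (mcoord n ω)) (hpos : ∀ i, 0 ≤ mcoord n ω i)
    (h3m : mcoord n ω ⟨0, by omega⟩ + mcoord n ω ⟨1, by omega⟩ + mcoord n ω ⟨2, by omega⟩ ≤ 1)
    (hsq : ∑ i, (mcoord n ω i) ^ 2 < 1)
    {u : Fin (n + 1) → ℤ} (hu : InSZ n u) (hsrt : SrtA n u)
    (htop : aZ n u ⟨0, by omega⟩ + aZ n u ⟨1, by omega⟩ + aZ n u ⟨2, by omega⟩ ≤ u 0)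
    (hd : 1 ≤ u 0) :
    mcoord n ω ⟨n - 1, Nat.sub_lt (by omega) Nat.one_pos⟩ ≤ Ar n ω u := by
  obtain ⟨h1, h2, h3⟩ := hu
  have hlt0 : (0 : ℕ) < n := by omega
  have hlt1 : (1 : ℕ) < n := by omega
  have hlt2 : (2 : ℕ) < n := by omega
  have hltl : n - 1 < n := by omega
  set m := mcoord n ω with hmdef
  set lst : Fin n := ⟨n - 1, hltl⟩ with hlst
  have htop' : aZ n u ⟨0, hlt0⟩ + aZ n u ⟨1, hlt1⟩ + aZ n u ⟨2, hlt2⟩ ≤ u 0 := htop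
  have h3m' : m ⟨0, hlt0⟩ + m ⟨1, hlt1⟩ + m ⟨2, hlt2⟩ ≤ 1 := h3m
  suffices hS : ∑ i : Fin n, m i * ((aZ n u i : ℤ) : ℝ) + m lst ≤ ((u 0 : ℤ) : ℝ) by
    simp only [Ar]
    linarith
  have hU1 : (1 : ℝ) ≤ ((u 0 : ℤ) : ℝ) := by exact_mod_cast hd
  by_cases hlastneg : aZ n u lst ≤ -1
  · -- Cauchy–Schwarz case
    set F : Fin n → ℝ := fun i => ((aZ n u i : ℤ) : ℝ) + if i = lst then 1 else 0 with hF
    have hF1 : ∑ i, m i * F i = ∑ i : Fin n, m i * ((aZ n u i : ℤ) : ℝ) + m lst := by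
      have e : ∀ i : Fin n, m i * F i
          = m i * ((aZ n u i : ℤ) : ℝ) + (if i = lst then m i else 0) := by
        intro i
        simp only [hF]
        by_cases h : i = lst
        · rw [if_pos h, if_pos h]; ring
        · rw [if_neg h, if_neg h]; ring
      rw [Finset.sum_congr rfl fun i _ => e i, Finset.sum_add_distrib,
        Finset.sum_ite_eq' Finset.univ lst m]
      simp
    have hcast2 : ∑ i : Fin n, ((aZ n u i : ℤ) : ℝ) ^ 2 = ((u 0 : ℤ) : ℝ) ^ 2 + 1 := by
      have := congrArg (fun z : ℤ => (z : ℝ)) h2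
      push_cast at this
      exact this
    have hF2 : ∑ i, F i ^ 2 ≤ ((u 0 : ℤ) : ℝ) ^ 2 := by
      have e : ∀ i : Fin n, F i ^ 2
          = ((aZ n u i : ℤ) : ℝ) ^ 2 + (if i = lst then 2 * ((aZ n u i : ℤ) : ℝ) + 1 else 0) := by
        intro i
        simp only [hF]
        by_cases h : i = lst
        · rw [if_pos h, if_pos h]; ring
        · rw [if_neg h, if_neg h]; ring
      rw [Finset.sum_congr rfl fun i _ => e i, Finset.sum_add_distrib,
        Finset.sum_ite_eq' Finset.univ lst (fun i => 2 * ((aZ n u i : ℤ) : ℝ) + 1), hcast2]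
      have hlc : ((aZ n u lst : ℤ) : ℝ) ≤ -1 := by exact_mod_cast hlastneg
      simp only [Finset.mem_univ, if_true]
      linarith
    have hCS := Finset.sum_mul_sq_le_sq_mul_sq Finset.univ m F
    have hFnn : (0 : ℝ) ≤ ∑ i, F i ^ 2 := Finset.sum_nonneg fun i _ => sq_nonneg _
    have hm2 : ∑ i, m i ^ 2 ≤ 1 := le_of_lt hsq
    have hmF2 : (∑ i, m i * F i) ^ 2 ≤ ((u 0 : ℤ) : ℝ) ^ 2 := by nlinarith [hCS, hF2, hFnn, hm2]
    rw [← hF1]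
    nlinarith [hmF2, hU1, sq_nonneg (∑ i, m i * F i - ((u 0 : ℤ) : ℝ))]
  · -- all coefficients nonnegative
    push_neg at hlastneg
    have hnn : ∀ i : Fin n, 0 ≤ aZ n u i := by
      intro i
      have h' : aZ n u lst ≤ aZ n u i := srt_le hsrt (i : ℕ) (n - 1) i.isLt hltl (by omega)
      omega
    have hsplitZ : aZ n u ⟨0, hlt0⟩ + aZ n u ⟨1, hlt1⟩ + aZ n u ⟨2, hlt2⟩
        + (∑ i ∈ Finset.univ.filter (fun i : Fin n => ¬ (i : ℕ) < 3), aZ n u i)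
        = 3 * u 0 - 1 := by
      have hsplit := Finset.sum_filter_add_sum_filter_not Finset.univ
        (fun i : Fin n => (i : ℕ) < 3) (aZ n u)
      rw [sum_first_three hn, h1] at hsplit
      exact hsplit
    have hrest0 : 0 ≤ ∑ i ∈ Finset.univ.filter (fun i : Fin n => ¬ (i : ℕ) < 3), aZ n u i :=
      Finset.sum_nonneg fun i _ => hnn i
    by_cases hd1 : u 0 = 1
    · -- d = 1 : the class is H - E_1 - E_2
      rw [hd1] at h1 h2 hsplitZ
      norm_num at h1 h2
      have ha0le : aZ n u ⟨0, hlt0⟩ ≤ 1 := by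
        by_contra hc
        push_neg at hc
        have hsq0 : 4 ≤ (aZ n u ⟨0, hlt0⟩) ^ 2 := by nlinarith
        have hle : (aZ n u ⟨0, hlt0⟩) ^ 2 ≤ ∑ i : Fin n, (aZ n u i) ^ 2 := by
          simpa using Finset.single_le_sum (f := fun i => (aZ n u i) ^ 2)
            (fun i _ => sq_nonneg _) (Finset.mem_univ (⟨0, hlt0⟩ : Fin n))
        omega
      have ha2 : aZ n u ⟨2, hlt2⟩ = 0 := by
        by_contra hc
        have h2pos : 1 ≤ aZ n u ⟨2, hlt2⟩ := by have := hnn ⟨2, hlt2⟩; omega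
        have ha1 : 1 ≤ aZ n u ⟨1, hlt1⟩ :=
          le_trans h2pos (srt_le hsrt 1 2 hlt1 hlt2 (by omega))
        have ha0 : 1 ≤ aZ n u ⟨0, hlt0⟩ :=
          le_trans ha1 (srt_le hsrt 0 1 hlt0 hlt1 (by omega))
        omega
      have hzero : ∀ i : Fin n, 2 ≤ (i : ℕ) → aZ n u i = 0 := by
        intro i hi
        have hub : aZ n u i ≤ aZ n u ⟨2, hlt2⟩ := srt_le hsrt 2 (i : ℕ) hlt2 i.isLt hi
        have := hnn i
        omega
      have hR : ∑ i ∈ Finset.univ.filter (fun i : Fin n => ¬ (i : ℕ) < 3), aZ n u i = 0 :=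
        Finset.sum_eq_zero fun i hi => hzero i (by simp at hi; omega)
      have ha1le : aZ n u ⟨1, hlt1⟩ ≤ aZ n u ⟨0, hlt0⟩ := srt_le hsrt 0 1 hlt0 hlt1 (by omega)
      have ha1nn := hnn ⟨1, hlt1⟩
      have ha0v : aZ n u ⟨0, hlt0⟩ = 1 := by omega
      have ha1v : aZ n u ⟨1, hlt1⟩ = 1 := by omega
      have hsum : ∑ i : Fin n, m i * ((aZ n u i : ℤ) : ℝ) = m ⟨0, hlt0⟩ + m ⟨1, hlt1⟩ := by
        have hsplitR := Finset.sum_filter_add_sum_filter_not Finset.univ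
          (fun i : Fin n => (i : ℕ) < 3) (fun i => m i * ((aZ n u i : ℤ) : ℝ))
        have hfirst : ∑ i ∈ Finset.univ.filter (fun i : Fin n => (i : ℕ) < 3),
            m i * ((aZ n u i : ℤ) : ℝ)
            = m ⟨0, hlt0⟩ * ((aZ n u ⟨0, hlt0⟩ : ℤ) : ℝ)
              + m ⟨1, hlt1⟩ * ((aZ n u ⟨1, hlt1⟩ : ℤ) : ℝ)
              + m ⟨2, hlt2⟩ * ((aZ n u ⟨2, hlt2⟩ : ℤ) : ℝ) :=
          sum_first_three hn _
        have hRz : ∑ i ∈ Finset.univ.filter (fun i : Fin n => ¬ (i : ℕ) < 3),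
            m i * ((aZ n u i : ℤ) : ℝ) = 0 :=
          Finset.sum_eq_zero fun i hi => by
            rw [hzero i (by simp at hi; omega)]; simp
        rw [← hsplitR, hfirst, hRz, ha0v, ha1v, ha2]
        norm_num
      rw [hsum, hd1]
      have hmlst : m lst ≤ m ⟨2, hlt2⟩ :=
        hm (show (⟨2, hlt2⟩ : Fin n) ≤ lst by rw [hlst, Fin.mk_le_mk]; omega)
      push_cast
      linarith [h3m', hmlst]
    · -- d ≥ 2 : Abel summation
      have hd2 : 2 ≤ u 0 := by omega
      -- first, n ≥ 7
      have hn7 : 7 ≤ n := by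
        by_contra hc
        push_neg at hc
        set T := Finset.univ.filter (fun i : Fin n => ¬ (i : ℕ) < 3) with hT
        set g : Fin n → Fin n := fun i =>
          if h : 3 ≤ (i : ℕ) then ⟨(i : ℕ) - 3, by omega⟩ else i with hg
        have hTval : ∀ i ∈ T, 3 ≤ (i : ℕ) := by
          intro i hi; simp [hT] at hi; omega
        have hinj : ∀ i ∈ T, ∀ j ∈ T, g i = g j → i = j := by
          intro i hi j hj hij
          have h3i := hTval i hi
          have h3j := hTval j hj
          simp only [hg, dif_pos h3i, dif_pos h3j, Fin.mk.injEq] at hij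
          exact Fin.ext (by omega)
        have hle : ∑ i ∈ T, aZ n u i ≤ ∑ i ∈ T, aZ n u (g i) := by
          apply Finset.sum_le_sum
          intro i hi
          have h3i := hTval i hi
          have hv : aZ n u i ≤ aZ n u ⟨(i : ℕ) - 3, by omega⟩ :=
            srt_le hsrt ((i : ℕ) - 3) (i : ℕ) (by omega) i.isLt (by omega)
          calc aZ n u i ≤ aZ n u ⟨(i : ℕ) - 3, by omega⟩ := hv
            _ = aZ n u (g i) := by rw [hg]; simp only [dif_pos h3i]
        have heq : ∑ i ∈ T, aZ n u (g i) = ∑ j ∈ T.image g, aZ n u j :=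
          (Finset.sum_image hinj).symm
        have hsub : T.image g ⊆ Finset.univ.filter (fun i : Fin n => (i : ℕ) < 3) := by
          intro j hj
          obtain ⟨i, hi, rfl⟩ := Finset.mem_image.1 hj
          have h3i := hTval i hi
          simp only [hg, dif_pos h3i]
          simp
          omega
        have hle2 : ∑ j ∈ T.image g, aZ n u j
            ≤ ∑ j ∈ Finset.univ.filter (fun i : Fin n => (i : ℕ) < 3), aZ n u j :=
          Finset.sum_le_sum_of_subset_of_nonneg hsub (fun j _ _ => hnn j)
        have hfirst : ∑ j ∈ Finset.univ.filter (fun i : Fin n => (i : ℕ) < 3), aZ n u j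
            = aZ n u ⟨0, hlt0⟩ + aZ n u ⟨1, hlt1⟩ + aZ n u ⟨2, hlt2⟩ := sum_first_three hn _
        rw [hfirst] at hle2
        omega
      set D : ℝ := ((u 0 : ℤ) : ℝ) with hD
      have hD0 : (0 : ℝ) ≤ D := by positivity
      have hlt3 : (3 : ℕ) < n := by omega
      have hlt4 : (4 : ℕ) < n := by omega
      have hlt5 : (5 : ℕ) < n := by omega
      have hlt6 : (6 : ℕ) < n := by omega
      set M : ℕ → ℝ := fun k => if h : k < n then m ⟨k, h⟩ else 0 with hM
      set AB : ℕ → ℝ := fun k => if h : k < n then ((aZ n u ⟨k, h⟩ : ℤ) : ℝ) else 0 with hAB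
      set c : ℕ → ℝ := fun k => AB k + (if k = n - 1 then 1 else 0)
        - (if k = 0 then D else 0) - (if k = 3 then D else 0) - (if k = 6 then D else 0) with hc
      have hM0 : ∀ k, 0 ≤ M k := by
        intro k
        by_cases h : k < n
        · simp only [hM, dif_pos h]; exact hpos _
        · simp only [hM, dif_neg h]; exact le_refl 0
      have hMa : ∀ k l, k ≤ l → M l ≤ M k := by
        intro k l hkl
        by_cases hl : l < n
        · have hk : k < n := by omega
          simp only [hM, dif_pos hl, dif_pos hk]
          exact hm (by simp only [Fin.mk_le_mk]; exact hkl)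
        · simp only [hM, dif_neg hl]; exact hM0 k
      have hABnn : ∀ k, 0 ≤ AB k := by
        intro k
        by_cases h : k < n
        · simp only [hAB, dif_pos h]; exact_mod_cast hnn ⟨k, h⟩
        · simp only [hAB, dif_neg h]; exact le_refl 0
      have hABval : ∀ (k : ℕ) (h : k < n), AB k = ((aZ n u ⟨k, h⟩ : ℤ) : ℝ) := by
        intro k h; simp only [hAB, dif_pos h]
      have hSAmono : ∀ K L, K ≤ L →
          (∑ k ∈ Finset.range K, AB k) ≤ ∑ k ∈ Finset.range L, AB k := fun K L h =>
        Finset.sum_le_sum_of_subset_of_nonneg (Finset.range_subset_range.2 h) (fun k _ _ => hABnn k)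
      have hSAn : ∑ k ∈ Finset.range n, AB k = 3 * D - 1 := by
        rw [← Fin.sum_univ_eq_sum_range (fun k => AB k) n]
        have e : ∀ i : Fin n, AB (i : ℕ) = ((aZ n u i : ℤ) : ℝ) := by
          intro i; rw [hABval (i : ℕ) i.isLt]
        rw [Finset.sum_congr rfl fun i _ => e i]
        have hcast := congrArg (fun z : ℤ => (z : ℝ)) h1
        push_cast at hcast
        rw [hcast, hD]
      have hSA3 : ∑ k ∈ Finset.range 3, AB k ≤ D := by
        rw [show (3 : ℕ) = 2 + 1 from rfl, Finset.sum_range_succ, Finset.sum_range_succ,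
          Finset.sum_range_succ, Finset.sum_range_zero]
        rw [hABval 0 hlt0, hABval 1 hlt1, hABval 2 hlt2, hD]
        have hc : ((aZ n u ⟨0, hlt0⟩ + aZ n u ⟨1, hlt1⟩ + aZ n u ⟨2, hlt2⟩ : ℤ) : ℝ)
            ≤ ((u 0 : ℤ) : ℝ) := by exact_mod_cast htop'
        push_cast at hc ⊢
        linarith
      have hSA6 : ∑ k ∈ Finset.range 6, AB k ≤ 2 * D := by
        rw [show (6 : ℕ) = 3 + 1 + 1 + 1 from rfl, Finset.sum_range_succ, Finset.sum_range_succ,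
          Finset.sum_range_succ]
        have h30 : AB 3 ≤ AB 0 := by
          rw [hABval 3 hlt3, hABval 0 hlt0]
          exact_mod_cast srt_le hsrt 0 3 hlt0 hlt3 (by omega)
        have h41 : AB 4 ≤ AB 1 := by
          rw [hABval 4 hlt4, hABval 1 hlt1]
          exact_mod_cast srt_le hsrt 1 4 hlt1 hlt4 (by omega)
        have h52 : AB 5 ≤ AB 2 := by
          rw [hABval 5 hlt5, hABval 2 hlt2]
          exact_mod_cast srt_le hsrt 2 5 hlt2 hlt5 (by omega)
        have hexp3 : ∑ k ∈ Finset.range 3, AB k = AB 0 + AB 1 + AB 2 := by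
          rw [show (3 : ℕ) = 2 + 1 from rfl, Finset.sum_range_succ, Finset.sum_range_succ,
            Finset.sum_range_succ, Finset.sum_range_zero]
          ring
        rw [hexp3] at hSA3 ⊢
        linarith
      have hpref : ∀ K, K ≤ n → ∑ k ∈ Finset.range K, c k ≤ 0 := by
        intro K hK
        have hind : ∀ (j : ℕ) (x : ℝ), ∑ k ∈ Finset.range K, (if k = j then x else 0)
            = if j < K then x else 0 := by
          intro j x
          rw [Finset.sum_ite_eq' (Finset.range K) j (fun _ => x)]
          simp [Finset.mem_range]
        have hexp : ∑ k ∈ Finset.range K, c k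
            = (∑ k ∈ Finset.range K, AB k) + (if n - 1 < K then 1 else 0)
              - (if 0 < K then D else 0) - (if 3 < K then D else 0)
              - (if 6 < K then D else 0) := by
          simp only [hc]
          rw [Finset.sum_sub_distrib, Finset.sum_sub_distrib, Finset.sum_sub_distrib,
            Finset.sum_add_distrib, hind (n - 1) 1, hind 0 D, hind 3 D, hind 6 D]
        rw [hexp]
        rcases Nat.lt_or_ge K 1 with hK1 | hK1
        · have hK0 : K = 0 := by omega
          subst hK0
          simp
        · rcases Nat.lt_or_ge K 4 with hK4 | hK4
          · rw [if_neg (by omega), if_pos (by omega), if_neg (by omega), if_neg (by omega)]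
            have := hSAmono K 3 (by omega)
            linarith [hSA3]
          · rcases Nat.lt_or_ge K 7 with hK7 | hK7
            · rw [if_neg (by omega), if_pos (by omega), if_pos (by omega), if_neg (by omega)]
              have := hSAmono K 6 (by omega)
              linarith [hSA6]
            · rw [if_pos (show 0 < K by omega), if_pos (show 3 < K by omega),
                if_pos (show 6 < K by omega)]
              have h1' := hSAmono K n hK
              have hind1 : (if n - 1 < K then (1 : ℝ) else 0) ≤ 1 := by
                split_ifs <;> norm_num
              linarith [hSAn]
      have habel := abel_nonpos M c hMa hM0 n hpref
      have hexp2 : ∑ k ∈ Finset.range n, M k * c k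
          = (∑ i : Fin n, m i * ((aZ n u i : ℤ) : ℝ)) + M (n - 1)
            - D * M 0 - D * M 3 - D * M 6 := by
        have e : ∀ k, M k * c k = M k * AB k + (if k = n - 1 then M k else 0)
            - (if k = 0 then M k * D else 0) - (if k = 3 then M k * D else 0)
            - (if k = 6 then M k * D else 0) := by
          intro k
          simp only [hc]
          split_ifs <;> ring
        have hind : ∀ (j : ℕ) (f : ℕ → ℝ), j < n →
            ∑ k ∈ Finset.range n, (if k = j then f k else 0) = f j := by
          intro j f hj
          rw [Finset.sum_ite_eq' (Finset.range n) j f]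
          simp [Finset.mem_range, hj]
        rw [Finset.sum_congr rfl fun k _ => e k]
        rw [Finset.sum_sub_distrib, Finset.sum_sub_distrib, Finset.sum_sub_distrib,
          Finset.sum_add_distrib, hind (n - 1) M (by omega), hind 0 (fun k => M k * D) (by omega),
          hind 3 (fun k => M k * D) (by omega), hind 6 (fun k => M k * D) (by omega)]
        have hMAB : ∑ k ∈ Finset.range n, M k * AB k
            = ∑ i : Fin n, m i * ((aZ n u i : ℤ) : ℝ) := by
          rw [← Fin.sum_univ_eq_sum_range (fun k => M k * AB k) n]
          refine Finset.sum_congr rfl fun i _ => ?_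
          simp only [hM, hAB, dif_pos i.isLt]
        rw [hMAB]
        ring
      have hMlst : M (n - 1) = m lst := by
        simp only [hM, dif_pos hltl, hlst]
      have hM036 : M 0 + M 3 + M 6 ≤ 1 := by
        have e0 : M 0 = m ⟨0, hlt0⟩ := by simp only [hM, dif_pos hlt0]
        have e3 : M 3 = m ⟨3, hlt3⟩ := by simp only [hM, dif_pos hlt3]
        have e6 : M 6 = m ⟨6, hlt6⟩ := by simp only [hM, dif_pos hlt6]
        have l3 : m ⟨3, hlt3⟩ ≤ m ⟨1, hlt1⟩ := hm (by simp only [Fin.mk_le_mk]; omega)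
        have l6 : m ⟨6, hlt6⟩ ≤ m ⟨2, hlt2⟩ := hm (by simp only [Fin.mk_le_mk]; omega)
        rw [e0, e3, e6]
        linarith [h3m']
      have hfin : D * (M 0 + M 3 + M 6) ≤ D * 1 := mul_le_mul_of_nonneg_left hM036 hD0
      rw [hexp2, hMlst] at habel
      linarith [habel, hfin]

end Lem38
namespace Lem38

open Finset

variable {n : ℕ}

lemma tZ_eq (hn : 3 ≤ n) (u : Fin (n + 1) → ℤ) :
    tZ n hn u = u 0 - (aZ n u ⟨0, by omega⟩ + aZ n u ⟨1, by omega⟩ + aZ n u ⟨2, by omega⟩) := by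
  have e1 : ((⟨0, by omega⟩ : Fin n)).succ = (⟨1, by omega⟩ : Fin (n + 1)) := rfl
  have e2 : ((⟨1, by omega⟩ : Fin n)).succ = (⟨2, by omega⟩ : Fin (n + 1)) := rfl
  have e3 : ((⟨2, by omega⟩ : Fin n)).succ = (⟨3, by omega⟩ : Fin (n + 1)) := rfl
  simp only [aZ, tZ, e1, e2, e3]
  ring

lemma descend (hn : 3 ≤ n) (ω : Fin (n + 1) → ℝ)
    (hm : Antitone (mcoord n ω)) (hpos : ∀ i, 0 ≤ mcoord n ω i)
    (h3m : mcoord n ω ⟨0, by omega⟩ + mcoord n ω ⟨1, by omega⟩ + mcoord n ω ⟨2, by omega⟩ ≤ 1)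
    (hsq : ∑ i, (mcoord n ω i) ^ 2 < 1) :
    ∀ (D : ℕ) (u : Fin (n + 1) → ℤ), InSZ n u → SrtA n u → (u 0).toNat ≤ D →
    mcoord n ω ⟨n - 1, Nat.sub_lt (by omega) Nat.one_pos⟩ ≤ Ar n ω u := by
  intro D
  induction D using Nat.strong_induction_on with
  | _ D ih =>
    intro u hu hsrt hD
    have hlt0 : (0 : ℕ) < n := by omega
    have hlt1 : (1 : ℕ) < n := by omega
    have hlt2 : (2 : ℕ) < n := by omega
    by_cases htop : aZ n u ⟨0, hlt0⟩ + aZ n u ⟨1, hlt1⟩ + aZ n u ⟨2, hlt2⟩ ≤ u 0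
    · rcases eq_or_lt_of_le hu.2.2 with h0 | h0
      · rw [case_d0 hn ω hu hsrt h0.symm]
      · exact main_bound hn ω hm hpos h3m hsq hu hsrt htop h0
    · push_neg at htop
      set u' := cremZ n hn u with hu'def
      have hins' : InSZ n u' := InSZ_crem hn u hu
      have htZ : tZ n hn u
          = u 0 - (aZ n u ⟨0, hlt0⟩ + aZ n u ⟨1, hlt1⟩ + aZ n u ⟨2, hlt2⟩) := tZ_eq hn u
      have htZneg : tZ n hn u ≤ -1 := by omega
      have hz' : u' 0 = u 0 + tZ n hn u := by simp [hu'def, cremZ]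
      have hd' : u' 0 ≤ u 0 - 1 := by omega
      have hd'0 : 0 ≤ u' 0 := hins'.2.2
      -- area decreases
      have hm3' : mcoord n ω ⟨0, by omega⟩ + mcoord n ω ⟨1, by omega⟩
          + mcoord n ω ⟨2, by omega⟩ ≤ 1 := h3m
      have hmnn : 0 ≤ 1 - (mcoord n ω ⟨0, by omega⟩ + mcoord n ω ⟨1, by omega⟩
          + mcoord n ω ⟨2, by omega⟩) := by linarith [hm3']
      have hAr' : Ar n ω u' ≤ Ar n ω u := by
        have := Ar_crem hn ω u
        have htR : ((tZ n hn u : ℤ) : ℝ) ≤ 0 := by exact_mod_cast htZneg.trans (by norm_num)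
        have hprod : ((tZ n hn u : ℤ) : ℝ) * (1 - (mcoord n ω ⟨0, by omega⟩
            + mcoord n ω ⟨1, by omega⟩ + mcoord n ω ⟨2, by omega⟩)) ≤ 0 :=
          mul_nonpos_iff.2 (Or.inr ⟨htR, hmnn⟩)
        rw [hu'def]
        linarith [this, hprod]
      -- sort u'
      obtain ⟨u'', hu'', hz'', hsrt'', hAr''⟩ := sortZ ω hm
        ((mInt n u' + n * ((u' 0) ^ 2 + 1)).toNat) u' hins' (le_refl _)
      have hrec := ih ((u'' 0).toNat) (by omega) u'' hu'' hsrt'' (le_refl _)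
      calc mcoord n ω ⟨n - 1, by omega⟩ ≤ Ar n ω u'' := hrec
        _ ≤ Ar n ω u' := hAr''
        _ ≤ Ar n ω u := hAr'

end Lem38
/-- Lemma 3.8 (following Pinsonnault): for a normalized reduced class
`ω = (1 | m_1, …, m_n)` with positive square (`m_1² + ⋯ + m_n² < 1`), the class
`E_n` has the smallest `ω`-area among all exceptional classes:
`ω·E ≥ m_n` for every `E ∈ ℰ_K`. -/
theorem last_exceptional_class_has_minimal_area
    (n : ℕ) (hn : 3 ≤ n) (ω : Fin (n + 1) → ℝ)
    (hnorm : ω 0 = 1)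
    (hred : IsReducedVec n ω)
    (hsq : ∑ i, (mcoord n ω i) ^ 2 < 1) :
    ∀ E ∈ EK n, mcoord n ω ⟨n - 1, by omega⟩ ≤ ip n ω E := by
  classical
  intro E hE
  obtain ⟨w, hw, hEeq⟩ := hE
  obtain ⟨hmono, hpos, hsum3⟩ := hred
  have h3m : mcoord n ω ⟨0, by omega⟩ + mcoord n ω ⟨1, by omega⟩
      + mcoord n ω ⟨2, by omega⟩ ≤ 1 := by
    have h := hsum3
    rw [Lem38.sum_first_three hn (mcoord n ω), hnorm] at h
    exact h
  set uEn : Fin (n + 1) → ℤ := fun j => if (j : ℕ) = n then 1 else 0 with huEn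
  have hcast : En n = Lem38.castVec n uEn := by
    funext j
    simp [En, Lem38.castVec, huEn, apply_ite]
  set lst : Fin n := ⟨n - 1, by omega⟩ with hlst
  have haEn : ∀ i : Fin n, Lem38.aZ n uEn i = if i = lst then -1 else 0 := by
    intro i
    simp only [Lem38.aZ, huEn, Fin.val_succ]
    by_cases h : (i : ℕ) + 1 = n
    · rw [if_pos h, if_pos (show i = lst from Fin.ext (by simp [hlst]; omega))]
    · rw [if_neg h, if_neg (show ¬ i = lst from fun hh => by
        have := congrArg Fin.val hh
        simp [hlst] at this
        omega)]
      simp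
  have hEnS : Lem38.InSZ n uEn := by
    have hz : uEn 0 = 0 := by
      simp only [huEn]
      rw [if_neg]
      simp
      omega
    refine ⟨?_, ?_, by rw [hz]⟩
    · rw [Finset.sum_congr rfl fun i _ => haEn i,
        Finset.sum_ite_eq' Finset.univ lst (fun _ => (-1 : ℤ)), hz]
      simp
    · have e : ∀ i : Fin n, (Lem38.aZ n uEn i) ^ 2 = if i = lst then 1 else 0 := by
        intro i
        rw [haEn i]
        split_ifs <;> norm_num
      rw [Finset.sum_congr rfl fun i _ => e i,
        Finset.sum_ite_eq' Finset.univ lst (fun _ => (1 : ℤ)), hz]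
      simp
  obtain ⟨u1, hu1, hworb⟩ := Lem38.orbit_in_S hn w hw uEn hEnS
  obtain ⟨u2, hu2, hz2, hsrt2, hAr2⟩ := Lem38.sortZ ω hmono
    ((Lem38.mInt n u1 + n * ((u1 0) ^ 2 + 1)).toNat) u1 hu1 (le_refl _)
  have hfin := Lem38.descend hn ω hmono hpos h3m hsq ((u2 0).toNat) u2 hu2 hsrt2 (le_refl _)
  rw [hEeq, hcast, hworb, Lem38.ip_cast ω hnorm u1]
  exact le_trans hfin hAr2
end
end

section
/- Let n ≥ 9 and let (1 | m_1, …, m_n) be a normalized reduced class with m_1² + ⋯ + m_n² < 1 (positive square). Then it is not the case that both m_1 + m_2 + m_3 = 1 and m_1 = m_2 = ⋯ = m_9; that is, the simple roots l_0, l_1, …, l_8 cannot all pair to zero with the class. (The claim proved in Lemma 2.17(iv): the Lagrangian root system of a reduced symplectic class contains no affine Ẽ_8 configuration, hence is a direct sum of ADE type root systems.) -/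
open Finset

/-- Lemma 2.17(iv) (key claim): a normalized reduced class `(1 | m_1, …, m_n)` with
positive square (`m_1² + ⋯ + m_n² < 1`) cannot satisfy both `m_1 + m_2 + m_3 = 1`
and `m_1 = m_2 = ⋯ = m_9`; i.e. the simple roots `l_0, …, l_8` cannot all have zero
pairing with the class.  Here `m i` denotes `m_{i+1}`, so `m_1 = m ⟨0,_⟩`. -/
theorem no_affine_E8_configuration
    (n : ℕ) (hn : 9 ≤ n) (m : Fin n → ℝ)
    (hmono : Antitone m)
    (hnn : ∀ i, 0 ≤ m i)
    (hred : m ⟨0, by omega⟩ + m ⟨1, by omega⟩ + m ⟨2, by omega⟩ ≤ 1)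
    (hsq : ∑ i, (m i) ^ 2 < 1) :
    ¬ (m ⟨0, by omega⟩ + m ⟨1, by omega⟩ + m ⟨2, by omega⟩ = 1 ∧
        ∀ i : Fin n, (i : ℕ) < 9 → m i = m ⟨0, by omega⟩) := by
  rintro ⟨h1, h2⟩
  have h0 : m ⟨0, by omega⟩ = 1/3 := by
    have e1 := h2 ⟨1, by omega⟩ (by norm_num)
    have e2 := h2 ⟨2, by omega⟩ (by norm_num)
    rw [e1, e2] at h1
    linarith
  have hinj : Function.Injective (Fin.castLE hn) := Fin.castLE_injective hn
  have hsum : ∑ j : Fin 9, m (Fin.castLE hn j) ^ 2 = 1 := by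
    have : ∀ j : Fin 9, m (Fin.castLE hn j) ^ 2 = (1/3)^2 := by
      intro j
      rw [h2 _ (by simpa using j.isLt), h0]
    rw [Finset.sum_congr rfl (fun j _ => this j)]
    norm_num
  have hle : ∑ j : Fin 9, m (Fin.castLE hn j) ^ 2 ≤ ∑ i, (m i) ^ 2 := by
    have himg : ∑ i ∈ (Finset.univ : Finset (Fin 9)).image (Fin.castLE hn), m i ^ 2
        = ∑ j : Fin 9, m (Fin.castLE hn j) ^ 2 :=
      Finset.sum_image (fun a _ b _ h => hinj h)
    rw [← himg]
    exact Finset.sum_le_sum_of_subset_of_nonneg (Finset.subset_univ _)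
      (fun i _ _ => sq_nonneg _)
  linarith
end
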